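/- With notation as in the construction: let Z = {z_R : R standard rectangle}, where z_R ∈ I_{(1)} × J_{(k)} is the chosen point in R = I × J (from Lemma 'pointFinder2'). For integers k, ℓ ≥ 1, let T_R = \widehat{I_{(ℓ)}} × \widehat{J_{(k)}} (the smallest dyadic rectangle containing both z_R and p_R). Then for any two distinct standard rectangles R, T, the point z_T does not belong to T_R. -/
import Mathlib


open MeasureTheory
open scoped ENNReal

/-- A dyadic interval `[k·2^n, (k+1)·2^n)`. -/
def IsDyadicInterval (I : Set ℝ) : Prop :=
  ∃ k n : ℤ, I = Set.Ico ((k : ℝ) * 2 ^ n) (((k : ℝ) + 1) * 2 ^ n)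

/-- An axis-parallel dyadic rectangle in the plane. -/
def IsDyadicRect (R : Set (ℝ × ℝ)) : Prop :=
  ∃ I J : Set ℝ, IsDyadicInterval I ∧ IsDyadicInterval J ∧ R = I ×ˢ J

/-- `dist_H(p,q)² = inf { |R| : R dyadic rectangle containing p and q }`. -/
noncomputable def distH2 (p q : ℝ × ℝ) : ℝ≥0∞ :=
  sInf {v | ∃ R : Set (ℝ × ℝ), IsDyadicRect R ∧ p ∈ R ∧ q ∈ R ∧ v = volume R}


lemma two_zpow_coe (n : ℤ) :
    (2:ℝ≥0∞)^n = (((2:NNReal)^n : NNReal) : ℝ≥0∞) := by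
  rw [ENNReal.coe_zpow two_ne_zero]
  norm_cast

lemma two_zpow_strictMono : StrictMono (fun n : ℤ => (2:ℝ≥0∞)^n) := by
  intro a b h
  simp only []
  rw [two_zpow_coe, two_zpow_coe, ENNReal.coe_lt_coe]
  exact zpow_right_strictMono₀ (by norm_num) h

lemma ofReal_two_zpow (n : ℤ) : ENNReal.ofReal ((2:ℝ)^n) = (2:ℝ≥0∞)^n := by
  rw [two_zpow_coe, ← ENNReal.ofReal_coe_nnreal]
  congr 1

lemma dyadic_vol {I : Set ℝ} (h : IsDyadicInterval I) : ∃ n : ℤ, volume I = (2:ℝ≥0∞)^n := by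
  obtain ⟨k, n, rfl⟩ := h
  refine ⟨n, ?_⟩
  rw [Real.volume_Ico, show ((k:ℝ)+1)*2^n - k*2^n = 2^n by ring, ofReal_two_zpow]

lemma dyadic_nested {I I' : Set ℝ} (h : IsDyadicInterval I) (h' : IsDyadicInterval I')
    {x : ℝ} (hx : x ∈ I) (hx' : x ∈ I') (hv : volume I ≤ volume I') : I ⊆ I' := by
  obtain ⟨a, n, rfl⟩ := h
  obtain ⟨b, n', rfl⟩ := h'
  have hvol : ∀ c m : ℤ, volume (Set.Ico ((c:ℝ) * 2 ^ m) (((c:ℝ)+1) * 2 ^ m)) = (2:ℝ≥0∞)^m := by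
    intro c m
    rw [Real.volume_Ico, show ((c:ℝ)+1)*2^m - c*2^m = 2^m by ring, ofReal_two_zpow]
  have hnn' : n ≤ n' := by
    have h2 := hv; rw [hvol, hvol] at h2
    exact (two_zpow_strictMono.le_iff_le).mp h2
  set d : ℕ := (n' - n).toNat with hd
  have hn' : n' = n + d := by omega
  have h2n : (0:ℝ) < 2 ^ n := zpow_pos (by norm_num) n
  have hsplit : (2:ℝ) ^ n' = 2 ^ (d:ℕ) * 2 ^ n := by
    rw [hn', zpow_add₀ (by norm_num : (2:ℝ) ≠ 0), zpow_natCast]; ring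
  obtain ⟨hx1, hx2⟩ := hx
  obtain ⟨hx1', hx2'⟩ := hx'
  have key1 : (b * 2 ^ d : ℤ) ≤ a := by
    have h1 : (b:ℝ) * 2 ^ (d:ℕ) < (a:ℝ) + 1 := by
      have hr : (b:ℝ) * 2 ^ (d:ℕ) * 2 ^ n < ((a:ℝ)+1) * 2 ^ n := by
        calc (b:ℝ) * 2 ^ (d:ℕ) * 2 ^ n = b * 2 ^ n' := by rw [hsplit]; ring
          _ ≤ x := hx1'
          _ < ((a:ℝ)+1) * 2 ^ n := hx2
      exact lt_of_mul_lt_mul_right hr h2n.le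
    have h2 : (b * 2 ^ d : ℤ) < a + 1 := by exact_mod_cast (by push_cast; linarith : ((b * 2 ^ d : ℤ):ℝ) < ((a+1:ℤ):ℝ))
    omega
  have key2 : a + 1 ≤ (b + 1) * 2 ^ d := by
    have h1 : (a:ℝ) < ((b:ℝ) + 1) * 2 ^ (d:ℕ) := by
      have hr : (a:ℝ) * 2 ^ n < ((b:ℝ)+1) * 2 ^ (d:ℕ) * 2 ^ n := by
        calc (a:ℝ) * 2 ^ n ≤ x := hx1
          _ < ((b:ℝ)+1) * 2 ^ n' := hx2'
          _ = ((b:ℝ)+1) * 2 ^ (d:ℕ) * 2 ^ n := by rw [hsplit]; ring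
      exact lt_of_mul_lt_mul_right hr h2n.le
    have h2 : (a : ℤ) < (b + 1) * 2 ^ d := by exact_mod_cast (by push_cast; linarith : ((a:ℤ):ℝ) < (((b+1) * 2 ^ d : ℤ):ℝ))
    omega
  intro y hy
  obtain ⟨hy1, hy2⟩ := hy
  constructor
  · calc (b:ℝ) * 2 ^ n' = (b * 2 ^ d : ℤ) * 2 ^ n := by push_cast; rw [hsplit]; ring
      _ ≤ (a:ℝ) * 2 ^ n := by
        apply mul_le_mul_of_nonneg_right _ h2n.le
        exact_mod_cast key1
      _ ≤ y := hy1
  · calc y < ((a:ℝ) + 1) * 2 ^ n := hy2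
      _ ≤ ((b + 1) * 2 ^ d : ℤ) * 2 ^ n := by
        apply mul_le_mul_of_nonneg_right _ h2n.le
        exact_mod_cast key2
      _ = ((b:ℝ) + 1) * 2 ^ n' := by push_cast; rw [hsplit]; ring

lemma vol_prod (A B : Set ℝ) : volume (A ×ˢ B) = volume A * volume B := by
  rw [Measure.volume_eq_prod, Measure.prod_prod]

def unitSq : Set (ℝ × ℝ) := Set.Ico (0 : ℝ) 1 ×ˢ Set.Ico (0 : ℝ) 1

/-- Lemma (TRz): let `R = I × J` and `R' = I' × J'` be distinct standard rectangles
with respective points `p, p'` of `P`, and let `z ∈ I_{(1)} × J_{(k)}`,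
`z' ∈ I'_{(1)} × J'_{(k)}` be the chosen points (far from all other points of `P`).
Then `z' ∉ T_R`, where `T_R = \widehat{I_{(1)}} × \widehat{J_{(k)}} = I × \widehat{J_{(k)}}`
is the smallest dyadic rectangle containing both `z` and `p`. -/
theorem stmt16 (m k : ℕ) (hk : 1 ≤ k) (P : Finset (ℝ × ℝ))
    (hPsub : (↑P : Set (ℝ × ℝ)) ⊆ unitSq)
    (hP1 : ∀ R : Set (ℝ × ℝ), IsDyadicRect R → R ⊆ unitSq →
      volume R = (2 : ℝ≥0∞) ^ (-(2 * (m : ℤ)) - 1) → ∃! q, q ∈ P ∧ q ∈ R)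
    (hP2 : ∀ p ∈ P, ∀ q ∈ P, p ≠ q → ∀ R : Set (ℝ × ℝ), IsDyadicRect R →
      p ∈ R → q ∈ R → (2 : ℝ≥0∞) ^ (-(2 * (m : ℤ))) ≤ volume R)
    -- the standard rectangle `R = I × J` with its point `p`
    (I J : Set ℝ) (hI : IsDyadicInterval I) (hJ : IsDyadicInterval J)
    (hRsub : I ×ˢ J ⊆ unitSq)
    (hRvol : volume (I ×ˢ J) = (2 : ℝ≥0∞) ^ (-(2 * (m : ℤ)) - 2))
    (p : ℝ × ℝ) (hpP : p ∈ P) (hpR : p ∈ I ×ˢ J)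
    -- the standard rectangle `R' = I' × J'` with its point `p'`
    (I' J' : Set ℝ) (hI' : IsDyadicInterval I') (hJ' : IsDyadicInterval J')
    (hRsub' : I' ×ˢ J' ⊆ unitSq)
    (hRvol' : volume (I' ×ˢ J') = (2 : ℝ≥0∞) ^ (-(2 * (m : ℤ)) - 2))
    (p' : ℝ × ℝ) (hpP' : p' ∈ P) (hpR' : p' ∈ I' ×ˢ J')
    (hRR' : I ×ˢ J ≠ I' ×ˢ J')
    -- `I₁ = I_{(1)}`: the dyadic child of `I` not containing `p.1`
    (I₁ : Set ℝ) (hI₁ : IsDyadicInterval I₁) (hI₁I : I₁ ⊆ I)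
    (hI₁vol : volume I₁ = 2⁻¹ * volume I) (hI₁p : p.1 ∉ I₁)
    -- `Jk = J_{(k)}`: generation-`k` descendant of `J` avoiding `p.2`, parent containing `p.2`
    (Jk : Set ℝ) (hJk : IsDyadicInterval Jk) (hJkJ : Jk ⊆ J)
    (hJkvol : volume Jk = (2 : ℝ≥0∞) ^ (-(k : ℤ)) * volume J) (hJkp : p.2 ∉ Jk)
    -- `Jkhat = \widehat{J_{(k)}}`: the dyadic parent of `Jk`, containing `p.2`
    (Jkhat : Set ℝ) (hJkhat : IsDyadicInterval Jkhat) (hJkJkhat : Jk ⊆ Jkhat)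
    (hJkhatvol : volume Jkhat = 2 * volume Jk) (hJkhatp : p.2 ∈ Jkhat)
    -- `I'₁ = I'_{(1)}` and `J'k = J'_{(k)}`
    (I'₁ : Set ℝ) (hI'₁ : IsDyadicInterval I'₁) (hI'₁I : I'₁ ⊆ I')
    (hI'₁vol : volume I'₁ = 2⁻¹ * volume I') (hI'₁p : p'.1 ∉ I'₁)
    (J'k : Set ℝ) (hJ'k : IsDyadicInterval J'k) (hJ'kJ : J'k ⊆ J')
    (hJ'kvol : volume J'k = (2 : ℝ≥0∞) ^ (-(k : ℤ)) * volume J') (hJ'kp : p'.2 ∉ J'k)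
    (hJ'kpar : ∃ Jhat : Set ℝ, IsDyadicInterval Jhat ∧ J'k ⊆ Jhat ∧
      volume Jhat = 2 * volume J'k ∧ p'.2 ∈ Jhat)
    -- the chosen points `z = z_R` and `z' = z_{R'}`
    (z z' : ℝ × ℝ) (hz : z ∈ I₁ ×ˢ Jk) (hz' : z' ∈ I'₁ ×ˢ J'k)
    (hzsep : ∀ q ∈ P, q ≠ p → (2 : ℝ≥0∞) ^ (-(2 * (m : ℤ)) - 1) ≤ distH2 q z)
    (hz'sep : ∀ q ∈ P, q ≠ p' → (2 : ℝ≥0∞) ^ (-(2 * (m : ℤ)) - 1) ≤ distH2 q z') :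
    z' ∉ I ×ˢ Jkhat := by
  have inj : ∀ a b : ℤ, (2:ℝ≥0∞)^a = 2^b → a = b := fun a b h =>
    two_zpow_strictMono.injective h
  obtain ⟨nI, hnI⟩ := dyadic_vol hI
  obtain ⟨nJ, hnJ⟩ := dyadic_vol hJ
  obtain ⟨nI', hnI'⟩ := dyadic_vol hI'
  obtain ⟨nJ', hnJ'⟩ := dyadic_vol hJ'
  obtain ⟨nI1', hnI1'⟩ := dyadic_vol hI'₁
  obtain ⟨nJk, hnJk⟩ := dyadic_vol hJk
  obtain ⟨nJkh, hnJkh⟩ := dyadic_vol hJkhat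
  obtain ⟨nJ'k, hnJ'k⟩ := dyadic_vol hJ'k
  have hzadd : ∀ a b : ℤ, (2:ℝ≥0∞)^(a+b) = 2^a * 2^b :=
    ENNReal.zpow_add two_ne_zero ENNReal.ofNat_ne_top
  -- exponent relations
  have hsum : nI + nJ = -(2 * (m:ℤ)) - 2 := by
    apply inj
    rw [hzadd, ← hnI, ← hnJ, ← vol_prod, hRvol]
  have hsum' : nI' + nJ' = -(2 * (m:ℤ)) - 2 := by
    apply inj
    rw [hzadd, ← hnI', ← hnJ', ← vol_prod, hRvol']
  have hnI1'e : nI1' = nI' - 1 := by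
    apply inj
    rw [← hnI1', hI'₁vol, hnI', show nI' - 1 = (-1) + nI' by ring, hzadd]
    congr 1
    exact (zpow_neg_one 2).symm
  have hnJke : nJk = nJ - k := by
    apply inj
    rw [← hnJk, hJkvol, hnJ, show nJ - (k:ℤ) = (-(k:ℤ)) + nJ by ring, hzadd]
  have hnJkhe : nJkh = nJ - k + 1 := by
    apply inj
    rw [← hnJkh, hJkhatvol, hnJk, hnJke, show nJ - (k:ℤ) + 1 = 1 + (nJ - k) by ring, hzadd,
      zpow_one]
  have hnJ'ke : nJ'k = nJ' - k := by
    apply inj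
    rw [← hnJ'k, hJ'kvol, hnJ', show nJ' - (k:ℤ) = (-(k:ℤ)) + nJ' by ring, hzadd]
  intro hmem
  obtain ⟨hm1, hm2⟩ := hmem
  by_cases hpp : p = p'
  · -- same point: dyadic nesting argument
    subst hpp
    rcases lt_trichotomy nI nI' with hlt | heq | hgt
    · -- |I| < |I'| : I ⊆ I'₁, so p.1 ∈ I'₁, contradiction
      have hle : volume I ≤ volume I'₁ := by
        rw [hnI, hnI1', hnI1'e]
        exact (two_zpow_strictMono.le_iff_le).mpr (by omega)
      exact hI'₁p (dyadic_nested hI hI'₁ hm1 hz'.1 hle hpR.1)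
    · -- equal sizes: R = R', contradiction
      have hJeq : nJ = nJ' := by omega
      have hIeq : I = I' := by
        apply Set.Subset.antisymm
        · exact dyadic_nested hI hI' hpR.1 hpR'.1 (by rw [hnI, hnI', heq])
        · exact dyadic_nested hI' hI hpR'.1 hpR.1 (by rw [hnI, hnI', heq])
      have hJeq' : J = J' := by
        apply Set.Subset.antisymm
        · exact dyadic_nested hJ hJ' hpR.2 hpR'.2 (by rw [hnJ, hnJ', hJeq])
        · exact dyadic_nested hJ' hJ hpR'.2 hpR.2 (by rw [hnJ, hnJ', hJeq])
      exact hRR' (by rw [hIeq, hJeq'])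
    · -- |I| > |I'| : Jkhat ⊆ J'k, so p.2 ∈ J'k, contradiction
      have hle : volume Jkhat ≤ volume J'k := by
        rw [hnJkh, hnJ'k, hnJkhe, hnJ'ke]
        exact (two_zpow_strictMono.le_iff_le).mpr (by omega)
      exact hJ'kp (dyadic_nested hJkhat hJ'k hm2 hz'.2 hle hJkhatp)
  · -- distinct points: T_R is a small dyadic rectangle containing p and z'
    have hdist : distH2 p z' ≤ volume (I ×ˢ Jkhat) := by
      apply sInf_le
      exact ⟨I ×ˢ Jkhat, ⟨I, Jkhat, hI, hJkhat, rfl⟩, ⟨hpR.1, hJkhatp⟩, ⟨hm1, hm2⟩, rfl⟩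
    have hvolT : volume (I ×ˢ Jkhat) = (2:ℝ≥0∞) ^ (nI + nJ + 1 - k) := by
      rw [vol_prod, hnI, hnJkh, hnJkhe, ← hzadd]
      congr 1
      ring
    have hcon : (2:ℝ≥0∞) ^ (-(2 * (m:ℤ)) - 1) ≤ (2:ℝ≥0∞) ^ (nI + nJ + 1 - k) :=
      le_trans (hz'sep p hpP hpp) (le_trans hdist (le_of_eq hvolT))
    have : -(2 * (m:ℤ)) - 1 ≤ nI + nJ + 1 - k := (two_zpow_strictMono.le_iff_le).mp hcon
    omega
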